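/- For every x ∈ M and every bond (y,z) ∈ B, the inner products ⟨a_x, b_{u(y,z)}⟩ and ⟨a_x, b_{ū(y,z)}⟩ in ℂ^Λ are both 0; that is, every a-vector is orthogonal to every b-vector. (This is the single-particle form of the anticommutation relation {a†_{x,σ}, b_{v,τ}} = 0.) -/

import Mathlib

lemma euclid_sum_apply {ι J : Type*} (s : Finset ι)
    (f : ι → EuclideanSpace ℂ J) (j : J) :
    (∑ i ∈ s, f i) j = ∑ i ∈ s, f i j := by
  induction s using Finset.cons_induction with
  | empty => rfl
  | cons a s h ih => rw [Finset.sum_cons, Finset.sum_cons, PiLp.add_apply, ih]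


/-- On the decorated lattice `Λ = M ⊕ B ⊕ B`, every `a`-vector is orthogonal to every
`b`-vector: `⟨a_x, b_{u(y,z)}⟩ = 0` and `⟨a_x, b_{ū(y,z)}⟩ = 0` for all `x ∈ M` and
all bonds `(y,z) ∈ B`. -/
theorem a_vectors_orthogonal_to_b_vectors
    {M : Type*} [Fintype M] [DecidableEq M] [Nonempty M]
    (B : Finset (M × M))
    (hirr : ∀ p ∈ B, p.1 ≠ p.2)
    (hasym : ∀ p ∈ B, (p.2, p.1) ∉ B)
    (ζ : ℕ) (hζ : 1 ≤ ζ)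
    (hreg : ∀ x : M,
      (Finset.univ.filter fun y : M => (x, y) ∈ B ∨ (y, x) ∈ B).card = ζ)
    (μ : ℝ) (hμ : 0 < μ)
    (a : M → EuclideanSpace ℂ (M ⊕ ({p // p ∈ B} ⊕ {p // p ∈ B})))
    (ha : ∀ x : M, a x = (((Real.sqrt (1 + 2 * ζ * μ ^ 2))⁻¹ : ℝ) : ℂ) •
      (EuclideanSpace.single (Sum.inl x) (1 : ℂ)
        + (μ : ℂ) • ∑ p ∈ Finset.univ.filter (fun p : {p // p ∈ B} => (p : M × M).1 = x),
            (EuclideanSpace.single (Sum.inr (Sum.inl p)) (1 : ℂ)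
              - EuclideanSpace.single (Sum.inr (Sum.inr p)) (1 : ℂ))
        + (μ : ℂ) • ∑ p ∈ Finset.univ.filter (fun p : {p // p ∈ B} => (p : M × M).2 = x),
            (EuclideanSpace.single (Sum.inr (Sum.inl p)) (1 : ℂ)
              + EuclideanSpace.single (Sum.inr (Sum.inr p)) (1 : ℂ))))
    (bu : {p // p ∈ B} → EuclideanSpace ℂ (M ⊕ ({p // p ∈ B} ⊕ {p // p ∈ B})))
    (hbu : ∀ p : {p // p ∈ B}, bu p = EuclideanSpace.single (Sum.inr (Sum.inl p)) (1 : ℂ)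
      - (μ : ℂ) • (EuclideanSpace.single (Sum.inl (p : M × M).1) (1 : ℂ)
          + EuclideanSpace.single (Sum.inl (p : M × M).2) (1 : ℂ)))
    (bbar : {p // p ∈ B} → EuclideanSpace ℂ (M ⊕ ({p // p ∈ B} ⊕ {p // p ∈ B})))
    (hbbar : ∀ p : {p // p ∈ B}, bbar p = EuclideanSpace.single (Sum.inr (Sum.inr p)) (1 : ℂ)
      + (μ : ℂ) • (EuclideanSpace.single (Sum.inl (p : M × M).1) (1 : ℂ)
          - EuclideanSpace.single (Sum.inl (p : M × M).2) (1 : ℂ))) :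
    ∀ (x : M) (p : {p // p ∈ B}),
      (inner ℂ (a x) (bu p) : ℂ) = 0 ∧ (inner ℂ (a x) (bbar p) : ℂ) = 0 := by
  intro x p
  set c : ℂ := (((Real.sqrt (1 + 2 * ζ * μ ^ 2))⁻¹ : ℝ) : ℂ) with hc
  have h1 : ∀ y : M, a x (Sum.inl y) = c * (if y = x then 1 else 0) := by
    intro y
    rw [ha x]
    simp [EuclideanSpace.single_apply, euclid_sum_apply, eq_comm]
  have h2 : a x (Sum.inr (Sum.inl p)) =
      c * μ * ((if (p : M × M).1 = x then 1 else 0) + (if (p : M × M).2 = x then 1 else 0)) := by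
    rw [ha x]
    simp only [PiLp.smul_apply, PiLp.add_apply, PiLp.sub_apply, euclid_sum_apply,
      EuclideanSpace.single_apply, Sum.inr.injEq, Sum.inl.injEq, smul_eq_mul,
      Finset.sum_sub_distrib, Finset.sum_add_distrib, Finset.sum_ite_eq,
      Finset.mem_filter, Finset.mem_attach, true_and, if_false, reduceIte]
    by_cases hp1 : (p : M × M).1 = x <;> by_cases hp2 : (p : M × M).2 = x <;>
      simp [hp1, hp2] <;> ring
  have h3 : a x (Sum.inr (Sum.inr p)) =
      c * μ * (-(if (p : M × M).1 = x then 1 else 0) + (if (p : M × M).2 = x then 1 else 0)) := by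
    rw [ha x]
    simp only [PiLp.smul_apply, PiLp.add_apply, PiLp.sub_apply, euclid_sum_apply,
      EuclideanSpace.single_apply, Sum.inr.injEq, Sum.inl.injEq, smul_eq_mul,
      Finset.sum_sub_distrib, Finset.sum_add_distrib, Finset.sum_ite_eq,
      Finset.mem_filter, Finset.mem_attach, true_and, if_false, reduceIte]
    by_cases hp1 : (p : M × M).1 = x <;> by_cases hp2 : (p : M × M).2 = x <;>
      simp [hp1, hp2] <;> ring
  constructor
  · rw [hbu p]
    simp only [inner_sub_right, inner_add_right, inner_smul_right,
      EuclideanSpace.inner_single_right, one_mul, h1, h2, h3]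
    simp [map_mul, map_add, Complex.conj_ofReal, apply_ite (starRingEnd ℂ), hc]
    split_ifs <;> ring
  · rw [hbbar p]
    simp only [inner_sub_right, inner_add_right, inner_smul_right,
      EuclideanSpace.inner_single_right, one_mul, h1, h2, h3]
    simp [map_mul, map_add, Complex.conj_ofReal, apply_ite (starRingEnd ℂ), hc]
    split_ifs <;> ring
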